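/- arXiv:1004.5289 — 3 statements merged into one kernel-verified Lean document; each statement's English description precedes it below -/
import Mathlib

section
/- Let f : (0,1] → ℝ be positive, measurable and regularly varying at 0+ with index ρ > -1, i.e. for every λ > 0, f(λx)/f(x) → λ^ρ as x → 0+. Then F(x) := ∫₀ˣ f(v) dv is finite for small x > 0 and is regularly varying at 0+ with index ρ + 1, i.e. F(λx)/F(x) → λ^{ρ+1} as x → 0+ for every λ > 0. -/
open Filter MeasureTheory

/-- If `f` is positive, measurable, integrable near `0`, and regularly varying at `0+`
with index `ρ > -1`, then `F(x) = ∫₀ˣ f` is finite for small `x > 0` and is regularly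
varying at `0+` with index `ρ + 1`. -/
theorem integral_regularly_varying (f : ℝ → ℝ) (ρ : ℝ) (hρ : -1 < ρ)
    (hpos : ∀ x ∈ Set.Ioc (0 : ℝ) 1, 0 < f x)
    (hmeas : Measurable f)
    (hint : IntegrableOn f (Set.Ioc (0 : ℝ) 1))
    (hrv : ∀ l : ℝ, 0 < l →
      Tendsto (fun x : ℝ => f (l * x) / f x) (nhdsWithin 0 (Set.Ioi 0))
        (nhds (l ^ ρ))) :
    (∃ b : ℝ, 0 < b ∧ ∀ x ∈ Set.Ioc (0 : ℝ) b, IntegrableOn f (Set.Ioc 0 x)) ∧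
      ∀ l : ℝ, 0 < l →
        Tendsto
          (fun x : ℝ => (∫ v in Set.Ioc (0 : ℝ) (l * x), f v) /
            ∫ v in Set.Ioc (0 : ℝ) x, f v)
          (nhdsWithin 0 (Set.Ioi 0)) (nhds (l ^ (ρ + 1))) := by
  have hb : ∀ x ∈ Set.Ioc (0 : ℝ) 1, IntegrableOn f (Set.Ioc 0 x) := fun x hx =>
    hint.mono_set (Set.Ioc_subset_Ioc_right hx.2)
  refine ⟨⟨1, one_pos, hb⟩, ?_⟩
  intro l hl
  -- positivity of F x
  have hFpos : ∀ x ∈ Set.Ioc (0 : ℝ) 1, 0 < ∫ v in Set.Ioc (0 : ℝ) x, f v := by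
    intro x hx
    have hnn : 0 ≤ᵐ[volume.restrict (Set.Ioc (0:ℝ) x)] f := by
      refine ae_restrict_of_forall_mem measurableSet_Ioc fun t ht => ?_
      exact (hpos t ⟨ht.1, ht.2.trans hx.2⟩).le
    rw [setIntegral_pos_iff_support_of_nonneg_ae hnn (hb x hx)]
    have hsub : Set.Ioc (0:ℝ) x ⊆ Function.support f ∩ Set.Ioc 0 x := fun t ht =>
      ⟨(hpos t ⟨ht.1, ht.2.trans hx.2⟩).ne', ht⟩
    calc (0:ENNReal) < volume (Set.Ioc (0:ℝ) x) := by
          simp [Real.volume_Ioc, hx.1]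
      _ ≤ _ := measure_mono hsub
  -- integrability of t ↦ f (l * t) on Ioc 0 x when 0 < x, l * x ≤ 1
  have hgint : ∀ x : ℝ, 0 < x → l * x ≤ 1 →
      IntegrableOn (fun t => f (l * t)) (Set.Ioc 0 x) := by
    intro x hx hlx
    have h1 : IntervalIntegrable f volume 0 (l * x) := by
      rw [intervalIntegrable_iff_integrableOn_Ioc_of_le (by positivity)]
      exact hb (l * x) ⟨by positivity, hlx⟩
    have h2 := h1.comp_mul_left (c := l)
    rw [zero_div, mul_div_cancel_left₀ _ hl.ne'] at h2
    rw [← intervalIntegrable_iff_integrableOn_Ioc_of_le hx.le]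
    exact h2
  -- change of variables
  have hcov : ∀ x : ℝ, 0 < x →
      (∫ v in Set.Ioc (0:ℝ) (l * x), f v) = ∫ t in Set.Ioc (0:ℝ) x, l * f (l * t) := by
    intro x hx
    rw [← intervalIntegral.integral_of_le (by positivity : (0:ℝ) ≤ l * x),
      ← intervalIntegral.integral_of_le hx.le, intervalIntegral.integral_const_mul,
      intervalIntegral.integral_comp_mul_left f hl.ne', mul_zero, smul_eq_mul]
    rw [← mul_assoc, mul_inv_cancel₀ hl.ne', one_mul]
  -- main estimate
  rw [Metric.tendsto_nhdsWithin_nhds]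
  intro ε hε
  have hε' : 0 < ε / 2 / l := by positivity
  obtain ⟨δ₁, hδ₁, hδ⟩ := Metric.tendsto_nhdsWithin_nhds.mp (hrv l hl) _ hε'
  refine ⟨min δ₁ (min 1 (1 / l)), by positivity, ?_⟩
  intro x hx hxd
  have hx0 : 0 < x := hx
  rw [Real.dist_eq, sub_zero, abs_of_pos hx0] at hxd
  have hx1 : x ≤ 1 := le_of_lt (lt_of_lt_of_le hxd ((min_le_right _ _).trans (min_le_left _ _)))
  have hxl : l * x ≤ 1 := by
    have : x < 1 / l := lt_of_lt_of_le hxd ((min_le_right _ _).trans (min_le_right _ _))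
    calc l * x ≤ l * (1 / l) := by nlinarith
      _ = 1 := by field_simp
  have hxδ1 : x < δ₁ := lt_of_lt_of_le hxd (min_le_left _ _)
  set F := fun y : ℝ => ∫ v in Set.Ioc (0:ℝ) y, f v with hF
  have hFx : 0 < F x := hFpos x ⟨hx0, hx1⟩
  -- pointwise estimate on Ioc 0 x
  have hpt : ∀ t ∈ Set.Ioc (0:ℝ) x, |l * f (l * t) - l ^ (ρ + 1) * f t| ≤ ε / 2 * f t := by
    intro t ht
    have ht1 : t ∈ Set.Ioc (0:ℝ) 1 := ⟨ht.1, ht.2.trans hx1⟩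
    have hft : 0 < f t := hpos t ht1
    have := hδ (x := t) ht.1 (by rw [Real.dist_eq, sub_zero, abs_of_pos ht.1]; exact lt_of_le_of_lt ht.2 hxδ1)
    rw [Real.dist_eq] at this
    have h1 : |f (l * t) / f t - l ^ ρ| ≤ ε / 2 / l := this.le
    have h2 : |f (l * t) - l ^ ρ * f t| ≤ ε / 2 / l * f t := by
      have hq : f (l * t) - l ^ ρ * f t = (f (l * t) / f t - l ^ ρ) * f t := by
        field_simp
      rw [hq, abs_mul, abs_of_pos hft]
      exact mul_le_mul_of_nonneg_right h1 hft.le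
    have hrw : l * f (l * t) - l ^ (ρ + 1) * f t = l * (f (l * t) - l ^ ρ * f t) := by
      rw [Real.rpow_add hl, Real.rpow_one]; ring
    rw [hrw, abs_mul, abs_of_pos hl]
    calc l * |f (l * t) - l ^ ρ * f t| ≤ l * (ε / 2 / l * f t) :=
          mul_le_mul_of_nonneg_left h2 hl.le
      _ = ε / 2 * f t := by field_simp
  -- integral estimate
  have hgi : IntegrableOn (fun t => l * f (l * t)) (Set.Ioc 0 x) :=
    (hgint x hx0 hxl).const_mul l
  have hfi : IntegrableOn f (Set.Ioc 0 x) := hb x ⟨hx0, hx1⟩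
  have hFl : F (l * x) = ∫ t in Set.Ioc (0:ℝ) x, l * f (l * t) := hcov x hx0
  have hkey : |F (l * x) - l ^ (ρ + 1) * F x| ≤ ε / 2 * F x := by
    have hsub : F (l * x) - l ^ (ρ + 1) * F x
        = ∫ t in Set.Ioc (0:ℝ) x, (l * f (l * t) - l ^ (ρ + 1) * f t) := by
      rw [hFl, integral_sub hgi (hfi.const_mul _), integral_const_mul, integral_const_mul]
    rw [hsub]
    have hb2 : (ε / 2) * F x = ∫ t in Set.Ioc (0:ℝ) x, ε / 2 * f t := by
      rw [integral_const_mul]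
    rw [hb2, ← Real.norm_eq_abs]
    refine norm_integral_le_of_norm_le (hfi.const_mul _) ?_
    refine ae_restrict_of_forall_mem measurableSet_Ioc fun t ht => ?_
    simpa [Real.norm_eq_abs] using hpt t ht
  rw [Real.dist_eq]
  have heq : (∫ v in Set.Ioc (0:ℝ) (l * x), f v) / (∫ v in Set.Ioc (0:ℝ) x, f v) - l ^ (ρ + 1)
      = (F (l * x) - l ^ (ρ + 1) * F x) / F x := by
    rw [show (∫ v in Set.Ioc (0:ℝ) (l * x), f v) = F (l * x) from rfl,
      show (∫ v in Set.Ioc (0:ℝ) x, f v) = F x from rfl,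
      sub_div, mul_div_assoc, div_self hFx.ne', mul_one]
  rw [heq, abs_div, abs_of_pos hFx, div_lt_iff₀ hFx]
  calc |F (l * x) - l ^ (ρ + 1) * F x| ≤ ε / 2 * F x := hkey
    _ < ε * F x := by nlinarith
end

section
/- Let c : [0,1] → ℝ be positive and continuous, fix κ > 0, 1 ≤ p < ∞, and set γ = 1/(κ + 1/p). Among all positive continuous densities h on [0,1] with ∫₀¹ h = 1, the functional h ↦ ( ∫₀¹ c(t)^{p/2} h(t)^{−κp} dt )^{1/p} is minimized by h*(t) = c(t)^{γ/2} / ∫₀¹ c(s)^{γ/2} ds, and the minimal value equals ( ∫₀¹ c(t)^{γ/2} dt )^{1/γ}. -/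
open MeasureTheory

lemma aux_memLp {f : ℝ → ℝ} (hf : ContinuousOn f (Set.Icc 0 1)) (q : ENNReal) :
    MemLp f q (volume.restrict (Set.Icc (0:ℝ) 1)) := by
  obtain ⟨C, hC⟩ := isCompact_Icc.exists_bound_of_continuousOn hf
  exact (memLp_top_of_bound (hf.aestronglyMeasurable measurableSet_Icc) C
    ((ae_restrict_iff' measurableSet_Icc).2 (Filter.Eventually.of_forall hC))).mono_exponent
    le_top

/-- The density `h*(t) = c(t)^(γ/2) / ∫₀¹ c^(γ/2)` with `γ = 1/(κ + 1/p)` minimizes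
`h ↦ (∫₀¹ c^(p/2) h^(−κp))^(1/p)` over positive continuous densities on `[0,1]`,
with minimal value `(∫₀¹ c^(γ/2))^(1/γ)`. -/
theorem optimal_density_Lp (c : ℝ → ℝ) (hc : ContinuousOn c (Set.Icc 0 1))
    (hcpos : ∀ t ∈ Set.Icc (0 : ℝ) 1, 0 < c t) (κ p γ : ℝ) (hκ : 0 < κ)
    (hp : 1 ≤ p) (hγ : γ = 1 / (κ + 1 / p)) :
    (∀ h : ℝ → ℝ, ContinuousOn h (Set.Icc 0 1) →
      (∀ t ∈ Set.Icc (0 : ℝ) 1, 0 < h t) → (∫ t in (0 : ℝ)..1, h t) = 1 →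
      ((∫ t in (0 : ℝ)..1, c t ^ (γ / 2)) ^ (1 / γ)
        ≤ (∫ t in (0 : ℝ)..1, c t ^ (p / 2) * h t ^ (-(κ * p))) ^ (1 / p)))
    ∧ (∫ t in (0 : ℝ)..1, c t ^ (p / 2) *
          (c t ^ (γ / 2) / ∫ s in (0 : ℝ)..1, c s ^ (γ / 2)) ^ (-(κ * p))) ^ (1 / p)
        = (∫ t in (0 : ℝ)..1, c t ^ (γ / 2)) ^ (1 / γ) := by
  have hp0 : (0:ℝ) < p := lt_of_lt_of_le one_pos hp
  have hκp : (0:ℝ) < κ * p := mul_pos hκ hp0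
  have hγ0 : 0 < γ := by rw [hγ]; positivity
  have hγa : γ * (κ * p + 1) = p := by
    rw [hγ]; field_simp
  -- the interval integral equals the set integral over Icc
  have int_eq : ∀ F : ℝ → ℝ, (∫ t in (0:ℝ)..1, F t) = ∫ t in Set.Icc (0:ℝ) 1, F t := by
    intro F
    rw [intervalIntegral.integral_of_le zero_le_one, ← integral_Icc_eq_integral_Ioc]
  have hcγ2 : ContinuousOn (fun t => c t ^ (γ/2)) (Set.Icc 0 1) :=
    hc.rpow_const fun t ht => Or.inl (hcpos t ht).ne'
  have hcγ2I : IntervalIntegrable (fun t => c t ^ (γ/2)) volume 0 1 := by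
    apply ContinuousOn.intervalIntegrable
    rwa [Set.uIcc_of_le zero_le_one]
  set I : ℝ := ∫ t in (0:ℝ)..1, c t ^ (γ/2) with hIdef
  have hI : 0 < I :=
    intervalIntegral.intervalIntegral_pos_of_pos_on hcγ2I
      (fun x hx => Real.rpow_pos_of_pos (hcpos x ⟨hx.1.le, hx.2.le⟩) _) one_pos
  constructor
  · intro h hh hhpos hh1
    set a : ℝ := κ * p + 1 with ha
    set b : ℝ := (κ * p + 1) / (κ * p) with hb
    have hconj : a.HolderConjugate b := by
      rw [Real.holderConjugate_iff_eq_conjExponent (by rw [ha]; linarith)]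
      rw [hb, ha, add_sub_cancel_right]
    set f : ℝ → ℝ := fun t => c t ^ (γ/2) * h t ^ (-(κ * γ)) with hf
    set g : ℝ → ℝ := fun t => h t ^ (κ * γ) with hg
    have hfc : ContinuousOn f (Set.Icc 0 1) :=
      hcγ2.mul (hh.rpow_const fun t ht => Or.inl (hhpos t ht).ne')
    have hgc : ContinuousOn g (Set.Icc 0 1) :=
      hh.rpow_const fun t ht => Or.inl (hhpos t ht).ne'
    have hfg : ∀ t ∈ Set.Icc (0:ℝ) 1, f t * g t = c t ^ (γ/2) := by
      intro t ht
      have := hhpos t ht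
      rw [hf, hg]
      simp only
      rw [mul_assoc, ← Real.rpow_add this, neg_add_cancel, Real.rpow_zero, mul_one]
    have hfa : ∀ t ∈ Set.Icc (0:ℝ) 1, f t ^ a = c t ^ (p/2) * h t ^ (-(κ * p)) := by
      intro t ht
      rw [hf]
      simp only
      rw [Real.mul_rpow (Real.rpow_nonneg (hcpos t ht).le _)
        (Real.rpow_nonneg (hhpos t ht).le _),
        ← Real.rpow_mul (hcpos t ht).le, ← Real.rpow_mul (hhpos t ht).le]
      congr 2
      · linear_combination (1/2)*hγa - (γ/2)*ha
      · linear_combination (-κ)*hγa + (κ*γ)*ha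
    have hgb : ∀ t ∈ Set.Icc (0:ℝ) 1, g t ^ b = h t := by
      intro t ht
      rw [hg]
      simp only
      rw [← Real.rpow_mul (hhpos t ht).le]
      have hexp : κ * γ * b = 1 := by
        rw [hb, mul_div_assoc', div_eq_one_iff_eq hκp.ne']
        linear_combination κ * hγa - κ * γ * ha
      rw [hexp, Real.rpow_one]
    set A : ℝ := ∫ t in (0:ℝ)..1, c t ^ (p / 2) * h t ^ (-(κ * p)) with hAdef
    have hA0 : 0 ≤ A :=
      intervalIntegral.integral_nonneg zero_le_one fun t ht =>
        mul_nonneg (Real.rpow_nonneg (hcpos t ht).le _) (Real.rpow_nonneg (hhpos t ht).le _)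
    have fnonneg : 0 ≤ᵐ[volume.restrict (Set.Icc (0:ℝ) 1)] f :=
      (ae_restrict_iff' measurableSet_Icc).2 (Filter.Eventually.of_forall fun t ht =>
        mul_nonneg (Real.rpow_nonneg (hcpos t ht).le _) (Real.rpow_nonneg (hhpos t ht).le _))
    have gnonneg : 0 ≤ᵐ[volume.restrict (Set.Icc (0:ℝ) 1)] g :=
      (ae_restrict_iff' measurableSet_Icc).2 (Filter.Eventually.of_forall fun t ht =>
        Real.rpow_nonneg (hhpos t ht).le _)
    have holder := integral_mul_le_Lp_mul_Lq_of_nonneg (μ := volume.restrict (Set.Icc (0:ℝ) 1))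
      hconj fnonneg gnonneg (aux_memLp hfc _) (aux_memLp hgc _)
    have e1 : I = ∫ t in Set.Icc (0:ℝ) 1, f t * g t := by
      rw [hIdef, int_eq]
      exact setIntegral_congr_fun measurableSet_Icc fun t ht => (hfg t ht).symm
    have e2 : (∫ t in Set.Icc (0:ℝ) 1, f t ^ a) = A := by
      rw [hAdef, int_eq]
      exact setIntegral_congr_fun measurableSet_Icc hfa
    have e3 : (∫ t in Set.Icc (0:ℝ) 1, g t ^ b) = 1 := by
      rw [setIntegral_congr_fun measurableSet_Icc hgb, ← int_eq, hh1]
    rw [e2, e3] at holder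
    have key : I ≤ A ^ (γ / p) := by
      have h1a : 1 / a = γ / p := by
        rw [ha]
        field_simp
        linear_combination (-1)*hγa + γ*ha
      calc I = ∫ t in Set.Icc (0:ℝ) 1, f t * g t := e1
        _ ≤ A ^ (1 / a) * (1:ℝ) ^ (1 / b) := holder
        _ = A ^ (γ / p) := by rw [Real.one_rpow, mul_one, h1a]
    calc I ^ (1 / γ) ≤ (A ^ (γ / p)) ^ (1 / γ) :=
          Real.rpow_le_rpow hI.le key (by positivity)
      _ = A ^ (1 / p) := by
          rw [← Real.rpow_mul hA0]
          congr 1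
          field_simp
  · have hpt : Set.EqOn (fun t => c t ^ (p / 2) * (c t ^ (γ / 2) / I) ^ (-(κ * p)))
        (fun t => c t ^ (γ / 2) * I ^ (κ * p)) (Set.uIcc (0:ℝ) 1) := by
      rw [Set.uIcc_of_le zero_le_one]
      intro t ht
      have hct := hcpos t ht
      simp only
      rw [Real.div_rpow (Real.rpow_nonneg hct.le _) hI.le, ← Real.rpow_mul hct.le,
        Real.rpow_neg hI.le, div_inv_eq_mul, ← mul_assoc, ← Real.rpow_add hct]
      congr 2
      linear_combination (-1/2) * hγa
    rw [intervalIntegral.integral_congr hpt, intervalIntegral.integral_mul_const, ← hIdef]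
    have : I * I ^ (κ * p) = I ^ (κ * p + 1) := by
      rw [Real.rpow_add hI, Real.rpow_one, mul_comm]
    rw [this, ← Real.rpow_mul hI.le]
    congr 1
    rw [hγ]
    field_simp
end

section
/- Let c : [0,1] → ℝ be positive and continuous and κ > 0. Among all positive continuous densities h on [0,1] with ∫₀¹ h = 1, the functional h ↦ max_{t∈[0,1]} c(t)^{1/2} h(t)^{−κ} is minimized by h*(t) = c(t)^{1/(2κ)} / ∫₀¹ c(s)^{1/(2κ)} ds, and the minimal value equals ( ∫₀¹ c(t)^{1/(2κ)} dt )^{κ}. -/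
/-- The density `h*(t) = c(t)^(1/(2κ)) / ∫₀¹ c^(1/(2κ))` minimizes
`h ↦ max_{[0,1]} c^(1/2) h^(−κ)` over positive continuous densities on `[0,1]`,
with minimal value `(∫₀¹ c^(1/(2κ)))^κ`. -/
theorem optimal_density_sup (c : ℝ → ℝ) (hc : ContinuousOn c (Set.Icc 0 1))
    (hcpos : ∀ t ∈ Set.Icc (0 : ℝ) 1, 0 < c t) (κ : ℝ) (hκ : 0 < κ) :
    (∀ h : ℝ → ℝ, ContinuousOn h (Set.Icc 0 1) →
      (∀ t ∈ Set.Icc (0 : ℝ) 1, 0 < h t) → (∫ t in (0 : ℝ)..1, h t) = 1 →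
      ((∫ t in (0 : ℝ)..1, c t ^ (1 / (2 * κ))) ^ κ
        ≤ sSup ((fun t => Real.sqrt (c t) * h t ^ (-κ)) '' Set.Icc 0 1)))
    ∧ sSup ((fun t => Real.sqrt (c t) *
          (c t ^ (1 / (2 * κ)) / ∫ s in (0 : ℝ)..1, c s ^ (1 / (2 * κ))) ^ (-κ)) ''
            Set.Icc 0 1)
        = (∫ t in (0 : ℝ)..1, c t ^ (1 / (2 * κ))) ^ κ := by
  set I := ∫ t in (0 : ℝ)..1, c t ^ (1 / (2 * κ)) with hIdef
  have hcont : ContinuousOn (fun t => c t ^ (1 / (2 * κ))) (Set.Icc 0 1) :=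
    hc.rpow_const (fun t ht => Or.inl (hcpos t ht).ne')
  have hIpos : 0 < I := by
    apply intervalIntegral.integral_pos one_pos hcont
    · intro x hx
      exact (Real.rpow_pos_of_pos (hcpos x ⟨hx.1.le, hx.2⟩) _).le
    · exact ⟨0, Set.left_mem_Icc.2 one_pos.le,
        Real.rpow_pos_of_pos (hcpos 0 (Set.left_mem_Icc.2 one_pos.le)) _⟩
  have hexp : 1 / (2 * κ) * κ = 1 / 2 := by field_simp
  have hsqrt : ∀ t ∈ Set.Icc (0:ℝ) 1, Real.sqrt (c t) = (c t ^ (1 / (2 * κ))) ^ κ := by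
    intro t ht
    rw [Real.sqrt_eq_rpow, ← Real.rpow_mul (hcpos t ht).le, hexp]
  -- key : I*x ≤ c t^(1/(2κ)) → I^κ ≤ sqrt(c t) * x^(-κ), with equality案
  have key : ∀ t ∈ Set.Icc (0:ℝ) 1, ∀ x : ℝ, 0 < x →
      I * x ≤ c t ^ (1 / (2 * κ)) → I ^ κ ≤ Real.sqrt (c t) * x ^ (-κ) := by
    intro t ht x hx hle
    have hxk : (0:ℝ) < x ^ (-κ) := Real.rpow_pos_of_pos hx _
    have h1 : (I * x) ^ κ ≤ (c t ^ (1 / (2 * κ))) ^ κ :=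
      Real.rpow_le_rpow (by positivity) hle hκ.le
    have h2 : (I * x) ^ κ = I ^ κ * x ^ κ := Real.mul_rpow hIpos.le hx.le
    have h3 : I ^ κ = (I * x) ^ κ * x ^ (-κ) := by
      rw [h2, mul_assoc, ← Real.rpow_add hx]
      simp
    rw [h3, hsqrt t ht]
    exact mul_le_mul_of_nonneg_right h1 hxk.le
  have keyeq : ∀ t ∈ Set.Icc (0:ℝ) 1, ∀ x : ℝ, 0 < x →
      I * x = c t ^ (1 / (2 * κ)) → Real.sqrt (c t) * x ^ (-κ) = I ^ κ := by
    intro t ht x hx heq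
    rw [hsqrt t ht, ← heq, Real.mul_rpow hIpos.le hx.le, mul_assoc,
      ← Real.rpow_add hx]
    simp
  constructor
  · intro h hhc hhpos hhint
    -- find t₀ with I * h t₀ ≤ c t₀ ^ (1/(2κ))
    have hex : ∃ t₀ ∈ Set.Icc (0:ℝ) 1, I * h t₀ ≤ c t₀ ^ (1 / (2 * κ)) := by
      by_contra hcon
      push_neg at hcon
      have : (∫ t in (0:ℝ)..1, c t ^ (1 / (2 * κ))) < ∫ t in (0:ℝ)..1, I * h t := by
        apply intervalIntegral.integral_lt_integral_of_continuousOn_of_le_of_exists_lt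
          one_pos hcont (continuousOn_const.mul hhc)
        · intro x hx
          exact (hcon x ⟨hx.1.le, hx.2⟩).le
        · exact ⟨0, Set.left_mem_Icc.2 one_pos.le,
            hcon 0 (Set.left_mem_Icc.2 one_pos.le)⟩
      rw [intervalIntegral.integral_const_mul, hhint, mul_one, ← hIdef] at this
      exact lt_irrefl I this
    obtain ⟨t₀, ht₀, hle⟩ := hex
    have hbdd : BddAbove ((fun t => Real.sqrt (c t) * h t ^ (-κ)) '' Set.Icc 0 1) := by
      apply IsCompact.bddAbove_image isCompact_Icc
      exact ((Real.continuous_sqrt.comp_continuousOn hc).mul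
        (hhc.rpow_const (fun t ht => Or.inl (hhpos t ht).ne')))
    calc I ^ κ ≤ Real.sqrt (c t₀) * h t₀ ^ (-κ) := key t₀ ht₀ _ (hhpos t₀ ht₀) hle
      _ ≤ _ := le_csSup hbdd ⟨t₀, ht₀, rfl⟩
  · have himg : ((fun t => Real.sqrt (c t) *
        (c t ^ (1 / (2 * κ)) / I) ^ (-κ)) '' Set.Icc 0 1) = {I ^ κ} := by
      apply Set.eq_singleton_iff_nonempty_unique_mem.2
      constructor
      · exact (Set.nonempty_Icc.2 one_pos.le).image _
      · rintro _ ⟨t, ht, rfl⟩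
        apply keyeq t ht _ (div_pos (Real.rpow_pos_of_pos (hcpos t ht) _) hIpos)
        field_simp
    rw [himg, csSup_singleton]
end
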